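/- If G is an {S,K}-split graph in which P_4 is a forbidden induced subgraph, then G is an {S,K}-threshold graph, i.e., G admits a threshold structure with clique part exactly K and stable part exactly S. -/

import Mathlib

open SimpleGraph

universe u

/-- `H` is forbidden as an induced subgraph of `G`: no induced subgraph of `G`
is isomorphic to `H`. -/
def ForbiddenIn {W : Type*} {V : Type*} (H : SimpleGraph W) (G : SimpleGraph V) : Prop :=
  ¬ ∃ f : W ↪ V, ∀ u v, G.Adj (f u) (f v) ↔ H.Adj u v

/-- The chair: vertices `0,1,2,3,4` with exactly the edges `01, 12, 23, 24`. -/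
def chair : SimpleGraph (Fin 5) :=
  SimpleGraph.fromRel (fun a b =>
    (a = 0 ∧ b = 1) ∨ (a = 1 ∧ b = 2) ∨ (a = 2 ∧ b = 3) ∨ (a = 2 ∧ b = 4))

/-- `C₄`, `C₄`'s complement, `C₅`, the chair and the co-chair are all forbidden in `G`. -/
def FiveForbidden {V : Type*} (G : SimpleGraph V) : Prop :=
  ForbiddenIn (cycleGraph 4) G ∧ ForbiddenIn (cycleGraph 4)ᶜ G ∧
  ForbiddenIn (cycleGraph 5) G ∧ ForbiddenIn chair G ∧ ForbiddenIn chairᶜ G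

/-- `G` is an `{S, K}`-split graph: `V(G)` is the disjoint union of the stable set `S`
and the clique `K`. -/
def IsSplitPartition {V : Type*} (G : SimpleGraph V) (S K : Set V) : Prop :=
  (∀ v, v ∈ S ∨ v ∈ K) ∧ Disjoint S K ∧
  (∀ a ∈ S, ∀ b ∈ S, ¬ G.Adj a b) ∧
  (∀ a ∈ K, ∀ b ∈ K, a ≠ b → G.Adj a b)

/-- `a b b' a'` is an induced path `P₄` in `G`: the four vertices are distinct and the
only edges among them are `ab`, `bb'`, `b'a'`. -/
def IsInducedP4 {V : Type*} (G : SimpleGraph V) (a b b' a' : V) : Prop :=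
  a ≠ b ∧ a ≠ b' ∧ a ≠ a' ∧ b ≠ b' ∧ b ≠ a' ∧ b' ≠ a' ∧
  G.Adj a b ∧ G.Adj b b' ∧ G.Adj b' a' ∧
  ¬ G.Adj a b' ∧ ¬ G.Adj a a' ∧ ¬ G.Adj b a'

/-- `G` is an `{S, K}`-threshold graph, following the paper's Definition 2.
Here `X i` stands for `X_{i+1}` (real indices `1,…,n+1`) and `A i` stands for `A_i`
(real indices `0,…,n`), so the condition `1 ≤ j ≤ i ≤ n` on real indices becomes
`(j : ℕ) < (i : ℕ)` on the `Fin (n+1)` indices. -/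
def IsSKThreshold {V : Type*} (G : SimpleGraph V) (S K : Set V) : Prop :=
  ∃ (n : ℕ) (X A : Fin (n + 1) → Set V),
    (∀ i j, i ≠ j → Disjoint (X i) (X j)) ∧
    (∀ i j, i ≠ j → Disjoint (A i) (A j)) ∧
    (∀ i j, Disjoint (X i) (A j)) ∧
    K = ⋃ i, X i ∧
    S = ⋃ i, A i ∧
    (∀ v, v ∈ S ∨ v ∈ K) ∧
    (∀ i : Fin (n + 1), (i : ℕ) < n → (X i).Nonempty) ∧
    (∀ i : Fin (n + 1), 0 < (i : ℕ) → (A i).Nonempty) ∧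
    (∀ u v, G.Adj u v ↔
      (u ∈ K ∧ v ∈ K ∧ u ≠ v) ∨
      (∃ i j : Fin (n + 1), (j : ℕ) < (i : ℕ) ∧
        ((u ∈ A i ∧ v ∈ X j) ∨ (v ∈ A i ∧ u ∈ X j))))

/-- The allowed cross (stable-to-clique) edges of a comb.  Indexing conventions:
`A i = A_i` (`0,…,n`), `X i = X_{i+1}` (`1,…,n+1`), `M k = M_{k+1}` (`1,…,l`),
`Y k = Y_{k+1}` (`1,…,l+2`).  `s` is the stable-side endpoint, `x` the clique-side one. -/
def CombCross {V : Type*} (n l k0 : ℕ) (A X : Fin (n + 1) → Set V)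
    (M : Fin l → Set V) (Y : Fin (l + 2) → Set V) (s x : V) : Prop :=
  (∃ i j : Fin (n + 1), (j : ℕ) < (i : ℕ) ∧ s ∈ A i ∧ x ∈ X j) ∨
  ((∃ i, s ∈ A i) ∧ (∃ j, x ∈ Y j)) ∨
  (∃ k : Fin l, s ∈ M k ∧ x ∈ Y ⟨(k : ℕ), by omega⟩) ∨
  (∃ (k1 : Fin l) (k2 : Fin (l + 2)), (k1 : ℕ) < (k2 : ℕ) ∧ (k2 : ℕ) < l ∧
    s ∈ M k1 ∧ x ∈ Y k2) ∨
  (∃ k : Fin l, (k : ℕ) + 1 ≤ k0 ∧ s ∈ M k ∧ x ∈ Y ⟨l, by omega⟩)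

/-- `G` is an `{S, K}`-comb, following the paper's Definition 3.
Indexing conventions as in `CombCross`; in particular `Y 0 = X 0` encodes `Y_1 = X_1`,
`Y ⟨l,_⟩` is `Y_{l+1}` and `Y ⟨l+1,_⟩` is `Y_{l+2}`. -/
def IsSKComb {V : Type*} (G : SimpleGraph V) (S K : Set V) : Prop :=
  ∃ (n l : ℕ) (A X : Fin (n + 1) → Set V) (M : Fin l → Set V)
    (Y : Fin (l + 2) → Set V) (k0 : ℕ),
    -- (1) the sets of the comb, `Y_1 = X_1`, pairwise disjointness of the sets
    Y 0 = X 0 ∧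
    (∀ i j, i ≠ j → Disjoint (A i) (A j)) ∧
    (∀ i j, i ≠ j → Disjoint (X i) (X j)) ∧
    (∀ i j, i ≠ j → Disjoint (M i) (M j)) ∧
    (∀ i j, i ≠ j → Disjoint (Y i) (Y j)) ∧
    (∀ i j, Disjoint (A i) (X j)) ∧
    (∀ i j, Disjoint (A i) (M j)) ∧
    (∀ i j, Disjoint (A i) (Y j)) ∧
    (∀ i j, Disjoint (M i) (X j)) ∧
    (∀ i j, Disjoint (M i) (Y j)) ∧
    (∀ (i : Fin (n + 1)) (j : Fin (l + 2)), 0 < (j : ℕ) → Disjoint (X i) (Y j)) ∧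
    -- (2) `S = A ∪ M` is stable and (3) `K = X ∪ Y` is a clique, and they partition `V(G)`
    S = (⋃ i, A i) ∪ (⋃ k, M k) ∧
    K = (⋃ i, X i) ∪ (⋃ k, Y k) ∧
    (∀ v, v ∈ S ∨ v ∈ K) ∧
    Disjoint S K ∧
    (∀ a ∈ S, ∀ b ∈ S, ¬ G.Adj a b) ∧
    (∀ a ∈ K, ∀ b ∈ K, a ≠ b → G.Adj a b) ∧
    -- (4) for `1 ≤ j ≤ i ≤ n`, `G[A_i ∪ X_j]` is a complete split graph
    (∀ i j : Fin (n + 1), (j : ℕ) < (i : ℕ) → ∀ a ∈ A i, ∀ x ∈ X j, G.Adj a x) ∧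
    -- (5) `G[A ∪ Y]` is a complete split graph
    (∀ i, ∀ a ∈ A i, ∀ j, ∀ y ∈ Y j, G.Adj a y) ∧
    -- (6) for `1 ≤ i ≤ l`, `G[Y_i ∪ M_i]` is a perfect split graph
    (∀ k : Fin l,
      (∀ y ∈ Y ⟨(k : ℕ), by omega⟩, ∃! m, m ∈ M k ∧ G.Adj y m) ∧
      (∀ m ∈ M k, ∃! y, y ∈ Y ⟨(k : ℕ), by omega⟩ ∧ G.Adj y m)) ∧
    -- (7) for `1 ≤ i < j ≤ l`, `G[Y_j ∪ M_i]` is a complete split graph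
    (∀ (k1 : Fin l) (k2 : Fin (l + 2)), (k1 : ℕ) < (k2 : ℕ) → (k2 : ℕ) < l →
      ∀ m ∈ M k1, ∀ y ∈ Y k2, G.Adj m y) ∧
    -- (8) `∃ 1 ≤ k0 ≤ l` such that for all `i ≤ k0`, `G[Y_{l+1} ∪ M_i]` is complete split
    (1 ≤ k0 ∧ k0 ≤ l ∧
      ∀ k : Fin l, (k : ℕ) + 1 ≤ k0 → ∀ m ∈ M k, ∀ y ∈ Y ⟨l, by omega⟩, G.Adj m y) ∧
    -- (9) only `X_{n+1}`, `Y_{l+2}`, `Y_{l+1}`, `M_l`, `A_0` may be empty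
    (∀ i : Fin (n + 1), (i : ℕ) < n → (X i).Nonempty) ∧
    (∀ i : Fin (n + 1), 0 < (i : ℕ) → (A i).Nonempty) ∧
    (∀ k : Fin l, (k : ℕ) + 1 < l → (M k).Nonempty) ∧
    (∀ k : Fin (l + 2), 0 < (k : ℕ) → (k : ℕ) < l → (Y k).Nonempty) ∧
    -- (10) these are the only edges of `G`
    (∀ u v, G.Adj u v → (u ∈ K ∧ v ∈ K) ∨
      CombCross n l k0 A X M Y u v ∨ CombCross n l k0 A X M Y v u)

/-- `G` is a comb. -/
def IsComb {V : Type*} (G : SimpleGraph V) : Prop :=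
  ∃ S K : Set V, IsSKComb G S K

open Classical

section ThresholdAux

variable {V : Type u} [Fintype V]

noncomputable def dval (G : SimpleGraph V) (v : V) : ℕ := (G.neighborFinset v).card

noncomputable def Dlev (G : SimpleGraph V) (S : Set V) : Finset ℕ :=
  ((Set.toFinite S).toFinset.image (dval G)).erase 0

noncomputable def elev (G : SimpleGraph V) (S : Set V) :
    Fin (Dlev G S).card ≃o (Dlev G S : Finset ℕ) := (Dlev G S).orderIsoOfFin rfl

lemma mem_Dlev {G : SimpleGraph V} {S : Set V} {m : ℕ} :
    m ∈ Dlev G S ↔ m ≠ 0 ∧ ∃ s ∈ S, dval G s = m := by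
  constructor
  · intro hm
    rw [Dlev, Finset.mem_erase, Finset.mem_image] at hm
    obtain ⟨h0, s, hs, hd⟩ := hm
    exact ⟨h0, s, (Set.Finite.mem_toFinset _).mp hs, hd⟩
  · rintro ⟨h0, s, hs, hd⟩
    rw [Dlev, Finset.mem_erase, Finset.mem_image]
    exact ⟨h0, s, (Set.Finite.mem_toFinset _).mpr hs, hd⟩

lemma elev_mem (G : SimpleGraph V) (S : Set V)
    (j : Fin (Dlev G S).card) : (elev G S j : ℕ) ∈ Dlev G S := (elev G S j).2

lemma elev_pos (G : SimpleGraph V) (S : Set V)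
    (j : Fin (Dlev G S).card) : 0 < (elev G S j : ℕ) :=
  Nat.pos_of_ne_zero (mem_Dlev.mp (elev_mem G S j)).1

lemma elev_surj (G : SimpleGraph V) (S : Set V)
    {m : ℕ} (hm : m ∈ Dlev G S) : ∃ j, (elev G S j : ℕ) = m := by
  obtain ⟨j, hj⟩ := (elev G S).surjective ⟨m, hm⟩
  exact ⟨j, by rw [hj]⟩

lemma elev_le_iff (G : SimpleGraph V) (S : Set V)
    {j k : Fin (Dlev G S).card} : (elev G S j : ℕ) ≤ (elev G S k : ℕ) ↔ j ≤ k := by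
  rw [Subtype.coe_le_coe]; exact (elev G S).le_iff_le

lemma elev_inj (G : SimpleGraph V) (S : Set V)
    {j k : Fin (Dlev G S).card} (h : (elev G S j : ℕ) = (elev G S k : ℕ)) : j = k :=
  (elev G S).injective (Subtype.ext h)

lemma dval_pos {G : SimpleGraph V} {s v : V} (h : G.Adj s v) : 0 < dval G s :=
  Finset.card_pos.2 ⟨v, (mem_neighborFinset G s v).2 h⟩

lemma chain_lemma {G : SimpleGraph V} {S K : Set V}
    (hsplit : IsSplitPartition G S K) (hP4 : ForbiddenIn (pathGraph 4) G)
    {s t : V} (hs : s ∈ S) (ht : t ∈ S) :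
    G.neighborFinset s ⊆ G.neighborFinset t ∨ G.neighborFinset t ⊆ G.neighborFinset s := by
  obtain ⟨hcov, hdisj, hstab, hclq⟩ := hsplit
  by_contra hcon
  push_neg at hcon
  obtain ⟨h1, h2⟩ := hcon
  obtain ⟨b, hb, hbn⟩ := Finset.not_subset.mp h1
  obtain ⟨b', hb', hb'n⟩ := Finset.not_subset.mp h2
  rw [mem_neighborFinset] at hb hb'
  rw [mem_neighborFinset] at hbn hb'n
  have hbK : b ∈ K := by
    rcases hcov b with h | h
    · exact absurd hb (hstab s hs b h)
    · exact h
  have hb'K : b' ∈ K := by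
    rcases hcov b' with h | h
    · exact absurd hb' (hstab t ht b' h)
    · exact h
  have hbb' : b ≠ b' := by rintro rfl; exact hb'n hb
  have hadjbb' : G.Adj b b' := hclq b hbK b' hb'K hbb'
  have hst : s ≠ t := by rintro rfl; exact hbn hb
  have hsb : s ≠ b := hb.ne
  have hsb' : s ≠ b' := fun h => hdisj.ne_of_mem hs hb'K h
  have htb : t ≠ b := fun h => hdisj.ne_of_mem ht hbK h
  have hnst : ¬ G.Adj s t := hstab s hs t ht
  have hntb : ¬ G.Adj t b := hbn
  have hnsb' : ¬ G.Adj s b' := hb'n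
  have htb' : t ≠ b' := hb'.ne
  refine hP4 ⟨⟨![s, b, b', t], ?_⟩, ?_⟩
  · intro u v huv
    fin_cases u <;> fin_cases v <;> simp_all
  · intro u v
    change G.Adj (![s, b, b', t] u) (![s, b, b', t] v) ↔ _
    fin_cases u <;> fin_cases v <;>
      simp [pathGraph_adj, hb, hb', hadjbb', hnst, hntb, hnsb', hb.symm, hb'.symm,
        hadjbb'.symm, show ((3:Fin 4):ℕ) = 3 from rfl]
    all_goals (intro h; first | exact hntb h.symm | exact hnsb' h.symm | exact hnst h.symm)

lemma nbhd_mono {G : SimpleGraph V} {S K : Set V}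
    (hsplit : IsSplitPartition G S K) (hP4 : ForbiddenIn (pathGraph 4) G)
    {s t : V} (hs : s ∈ S) (ht : t ∈ S) (hle : dval G s ≤ dval G t) :
    G.neighborFinset s ⊆ G.neighborFinset t := by
  rcases chain_lemma hsplit hP4 hs ht with h | h
  · exact h
  · rw [← Finset.eq_of_subset_of_card_le h hle]

lemma adj_mono {G : SimpleGraph V} {S K : Set V}
    (hsplit : IsSplitPartition G S K) (hP4 : ForbiddenIn (pathGraph 4) G)
    {s t v : V} (hs : s ∈ S) (ht : t ∈ S) (hle : dval G s ≤ dval G t)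
    (h : G.Adj s v) : G.Adj t v :=
  (mem_neighborFinset G t v).1 (nbhd_mono hsplit hP4 hs ht hle ((mem_neighborFinset G s v).2 h))

lemma exists_min_adj (G : SimpleGraph V) (S : Set V) {s v : V} (hs : s ∈ S)
    (hsv : G.Adj s v) : ∃ t₀, t₀ ∈ S ∧ G.Adj t₀ v ∧
      ∀ t, t ∈ S → G.Adj t v → dval G t₀ ≤ dval G t := by
  classical
  obtain ⟨t₀, ht₀, hmin⟩ := Finset.exists_min_image
    ((Set.toFinite S).toFinset.filter (fun t => G.Adj t v)) (dval G)
    ⟨s, Finset.mem_filter.2 ⟨(Set.Finite.mem_toFinset _).2 hs, hsv⟩⟩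
  rw [Finset.mem_filter, Set.Finite.mem_toFinset] at ht₀
  exact ⟨t₀, ht₀.1, ht₀.2, fun t htS htv =>
    hmin t (by rw [Finset.mem_filter, Set.Finite.mem_toFinset]; exact ⟨htS, htv⟩)⟩

noncomputable def Xthr (G : SimpleGraph V) (S K : Set V) (j : ℕ) : Set V :=
  if h : j < (Dlev G S).card then
    {v | v ∈ K ∧ ∃ s, s ∈ S ∧ G.Adj s v ∧ dval G s = (elev G S ⟨j, h⟩ : ℕ) ∧
      ∀ t, t ∈ S → G.Adj t v → (elev G S ⟨j, h⟩ : ℕ) ≤ dval G t}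
  else {v | v ∈ K ∧ ∀ s, s ∈ S → ¬ G.Adj s v}

noncomputable def Athr (G : SimpleGraph V) (S : Set V) (i : ℕ) : Set V :=
  if h : i - 1 < (Dlev G S).card ∧ 1 ≤ i then
    {s | s ∈ S ∧ dval G s = (elev G S ⟨i - 1, h.1⟩ : ℕ)}
  else {s | s ∈ S ∧ dval G s = 0}

lemma Xthr_subset_K (G : SimpleGraph V) (S K : Set V) (j : ℕ) : Xthr G S K j ⊆ K := by
  unfold Xthr; split_ifs <;> exact fun v hv => hv.1

lemma Athr_subset_S (G : SimpleGraph V) (S : Set V) (i : ℕ) : Athr G S i ⊆ S := by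
  unfold Athr; split_ifs <;> exact fun v hv => hv.1

end ThresholdAux


theorem stmt_6 {V : Type u} [Fintype V] (G : SimpleGraph V) (S K : Set V)
    (hsplit : IsSplitPartition G S K) (hP4 : ForbiddenIn (pathGraph 4) G) :
    IsSKThreshold G S K := by
  classical
  obtain ⟨hcov, hdisj, hstab, hclq⟩ := id hsplit
  refine ⟨(Dlev G S).card, fun j => Xthr G S K (j : ℕ), fun i => Athr G S (i : ℕ),
    ?_, ?_, ?_, ?_, ?_, hcov, ?_, ?_, ?_⟩
  · -- X pairwise disjoint
    intro i j hne
    rw [Set.disjoint_left]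
    intro v hvi hvj
    simp only [Xthr] at hvi hvj
    by_cases hi : (i : ℕ) < (Dlev G S).card <;> by_cases hj : (j : ℕ) < (Dlev G S).card
    · rw [dif_pos hi] at hvi
      rw [dif_pos hj] at hvj
      obtain ⟨-, s, hsS, hsv, hsd, hsm⟩ := hvi
      obtain ⟨-, t, htS, htv, htd, htm⟩ := hvj
      have h1 : (elev G S ⟨(i : ℕ), hi⟩ : ℕ) ≤ (elev G S ⟨(j : ℕ), hj⟩ : ℕ) := by
        rw [← htd]; exact hsm t htS htv
      have h2 : (elev G S ⟨(j : ℕ), hj⟩ : ℕ) ≤ (elev G S ⟨(i : ℕ), hi⟩ : ℕ) := by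
        rw [← hsd]; exact htm s hsS hsv
      have h3 := elev_inj G S (le_antisymm h1 h2)
      rw [Fin.mk.injEq] at h3
      exact hne (Fin.ext h3)
    · rw [dif_pos hi] at hvi
      rw [dif_neg hj] at hvj
      obtain ⟨-, s, hsS, hsv, -, -⟩ := hvi
      exact hvj.2 s hsS hsv
    · rw [dif_neg hi] at hvi
      rw [dif_pos hj] at hvj
      obtain ⟨-, s, hsS, hsv, -, -⟩ := hvj
      exact hvi.2 s hsS hsv
    · refine hne (Fin.ext ?_)
      have h1 := i.isLt
      have h2 := j.isLt
      omega
  · -- A pairwise disjoint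
    intro i j hne
    rw [Set.disjoint_left]
    intro s hvi hvj
    simp only [Athr] at hvi hvj
    by_cases hi : 1 ≤ (i : ℕ) <;> by_cases hj : 1 ≤ (j : ℕ)
    · have hi' : (i : ℕ) - 1 < (Dlev G S).card := by have := i.isLt; omega
      have hj' : (j : ℕ) - 1 < (Dlev G S).card := by have := j.isLt; omega
      rw [dif_pos (⟨hi', hi⟩ : _ ∧ _)] at hvi
      rw [dif_pos (⟨hj', hj⟩ : _ ∧ _)] at hvj
      have h3 := elev_inj G S (hvi.2.symm.trans hvj.2)
      rw [Fin.mk.injEq] at h3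
      exact hne (Fin.ext (by omega))
    · have hi' : (i : ℕ) - 1 < (Dlev G S).card := by have := i.isLt; omega
      rw [dif_pos (⟨hi', hi⟩ : _ ∧ _)] at hvi
      rw [dif_neg (by omega : ¬((j : ℕ) - 1 < (Dlev G S).card ∧ 1 ≤ (j : ℕ)))] at hvj
      have hp := elev_pos G S ⟨(i : ℕ) - 1, hi'⟩
      have e1 := hvi.2
      have e2 := hvj.2
      omega
    · have hj' : (j : ℕ) - 1 < (Dlev G S).card := by have := j.isLt; omega
      rw [dif_pos (⟨hj', hj⟩ : _ ∧ _)] at hvj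
      rw [dif_neg (by omega : ¬((i : ℕ) - 1 < (Dlev G S).card ∧ 1 ≤ (i : ℕ)))] at hvi
      have hp := elev_pos G S ⟨(j : ℕ) - 1, hj'⟩
      have e1 := hvi.2
      have e2 := hvj.2
      omega
    · exact hne (Fin.ext (by omega))
  · -- X disjoint from A
    intro i j
    rw [Set.disjoint_left]
    intro v hx ha
    exact Set.disjoint_left.1 hdisj (Athr_subset_S G S _ ha) (Xthr_subset_K G S K _ hx)
  · -- K = union of X
    ext v
    simp only [Set.mem_iUnion]
    constructor
    · intro hvK
      by_cases hex : ∃ s, s ∈ S ∧ G.Adj s v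
      · obtain ⟨s, hsS, hsv⟩ := hex
        obtain ⟨t₀, ht₀S, ht₀v, hmin⟩ := exists_min_adj G S hsS hsv
        obtain ⟨j, hj⟩ := elev_surj G S (mem_Dlev.2 ⟨(dval_pos ht₀v).ne', t₀, ht₀S, rfl⟩)
        refine ⟨⟨(j : ℕ), Nat.lt_succ_of_lt j.isLt⟩, ?_⟩
        show v ∈ Xthr G S K (j : ℕ)
        rw [Xthr, dif_pos j.isLt]
        exact ⟨hvK, t₀, ht₀S, ht₀v, hj.symm,
          fun t htS htv => le_of_eq_of_le hj (hmin t htS htv)⟩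
      · push_neg at hex
        refine ⟨⟨(Dlev G S).card, lt_add_one _⟩, ?_⟩
        show v ∈ Xthr G S K (Dlev G S).card
        rw [Xthr, dif_neg (lt_irrefl _)]
        exact ⟨hvK, hex⟩
    · rintro ⟨i, hi⟩
      exact Xthr_subset_K G S K _ hi
  · -- S = union of A
    ext s
    simp only [Set.mem_iUnion]
    constructor
    · intro hsS
      by_cases h0 : dval G s = 0
      · refine ⟨0, ?_⟩
        show s ∈ Athr G S ((0 : Fin ((Dlev G S).card + 1)) : ℕ)
        rw [Athr, dif_neg (by simp)]
        exact ⟨hsS, h0⟩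
      · obtain ⟨j, hj⟩ := elev_surj G S (mem_Dlev.2 ⟨h0, s, hsS, rfl⟩)
        refine ⟨⟨(j : ℕ) + 1, Nat.succ_lt_succ j.isLt⟩, ?_⟩
        show s ∈ Athr G S ((j : ℕ) + 1)
        rw [Athr, dif_pos (show (j : ℕ) + 1 - 1 < (Dlev G S).card ∧ 1 ≤ (j : ℕ) + 1 from
          ⟨j.isLt, by omega⟩)]
        exact ⟨hsS, hj.symm⟩
    · rintro ⟨i, hi⟩
      exact Athr_subset_S G S _ hi
  · -- X nonempty
    intro i hi
    obtain ⟨hm0, s, hsS, hsd⟩ := mem_Dlev.1 (elev_mem G S ⟨(i : ℕ), hi⟩)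
    have hwexists : ∀ w, G.Adj s w → w ∈ K := by
      intro w hadj
      rcases hcov w with h | h
      · exact absurd hadj (hstab s hsS w h)
      · exact h
    by_cases hF : (((Set.toFinite S).toFinset).filter
        (fun t => 0 < dval G t ∧ dval G t < dval G s)).Nonempty
    · obtain ⟨t₀, ht₀, hmax⟩ := Finset.exists_max_image _ (dval G) hF
      rw [Finset.mem_filter, Set.Finite.mem_toFinset] at ht₀
      obtain ⟨ht₀S, ht₀pos, ht₀lt⟩ := ht₀
      have hv : ∃ w ∈ G.neighborFinset s, w ∉ G.neighborFinset t₀ := by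
        by_contra hco
        push_neg at hco
        have hcard : dval G s ≤ dval G t₀ := Finset.card_le_card fun w hw => hco w hw
        omega
      obtain ⟨w, hwN, hwn⟩ := hv
      have hadj : G.Adj s w := (mem_neighborFinset G s w).1 hwN
      refine ⟨w, ?_⟩
      show w ∈ Xthr G S K (i : ℕ)
      rw [Xthr, dif_pos hi]
      refine ⟨hwexists w hadj, s, hsS, hadj, hsd, ?_⟩
      intro t htS htv
      by_contra hlt
      push_neg at hlt
      have htpos := dval_pos htv
      have hle := hmax t (Finset.mem_filter.2
        ⟨(Set.Finite.mem_toFinset _).2 htS, htpos, by omega⟩)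
      have hsub := nbhd_mono hsplit hP4 htS ht₀S hle
      exact hwn (hsub ((mem_neighborFinset G t w).2 htv))
    · have hpos : 0 < dval G s := by omega
      obtain ⟨w, hwN⟩ := Finset.card_pos.1 hpos
      have hadj : G.Adj s w := (mem_neighborFinset G s w).1 hwN
      refine ⟨w, ?_⟩
      show w ∈ Xthr G S K (i : ℕ)
      rw [Xthr, dif_pos hi]
      refine ⟨hwexists w hadj, s, hsS, hadj, hsd, ?_⟩
      intro t htS htv
      by_contra hlt
      push_neg at hlt
      exact hF ⟨t, Finset.mem_filter.2
        ⟨(Set.Finite.mem_toFinset _).2 htS, dval_pos htv, by omega⟩⟩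
  · -- A nonempty
    intro i hi
    have hi' : (i : ℕ) - 1 < (Dlev G S).card := by have := i.isLt; omega
    obtain ⟨hm0, s, hsS, hsd⟩ := mem_Dlev.1 (elev_mem G S ⟨(i : ℕ) - 1, hi'⟩)
    refine ⟨s, ?_⟩
    show s ∈ Athr G S (i : ℕ)
    rw [Athr, dif_pos (show (i : ℕ) - 1 < (Dlev G S).card ∧ 1 ≤ (i : ℕ) from
      ⟨hi', by omega⟩)]
    exact ⟨hsS, hsd⟩
  · -- adjacency characterization
    intro u v
    have key : ∀ (i j : Fin ((Dlev G S).card + 1)), (j : ℕ) < (i : ℕ) → ∀ a x,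
        a ∈ Athr G S (i : ℕ) → x ∈ Xthr G S K (j : ℕ) → G.Adj a x := by
      intro i j hlt a x ha hx
      have hi1 : 1 ≤ (i : ℕ) := by omega
      have hi' : (i : ℕ) - 1 < (Dlev G S).card := by have := i.isLt; omega
      have hj' : (j : ℕ) < (Dlev G S).card := by have := i.isLt; omega
      rw [Athr, dif_pos (⟨hi', hi1⟩ : _ ∧ _)] at ha
      rw [Xthr, dif_pos hj'] at hx
      obtain ⟨haS, had⟩ := ha
      obtain ⟨hxK, s, hsS, hsx, hsd, -⟩ := hx
      have hle : dval G s ≤ dval G a := by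
        rw [had, hsd]
        exact (elev_le_iff G S).2 (Fin.mk_le_mk.mpr (by omega))
      exact adj_mono hsplit hP4 hsS haS hle hsx
    constructor
    · intro huv
      rcases hcov u with hu | hu <;> rcases hcov v with hv | hv
      · exact absurd huv (hstab u hu v hv)
      · right
        obtain ⟨t₀, ht₀S, ht₀v, hmin⟩ := exists_min_adj G S hu huv
        obtain ⟨j, hj⟩ := elev_surj G S (mem_Dlev.2 ⟨(dval_pos ht₀v).ne', t₀, ht₀S, rfl⟩)
        obtain ⟨i', hi'⟩ := elev_surj G S (mem_Dlev.2 ⟨(dval_pos huv).ne', u, hu, rfl⟩)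
        have hji : j ≤ i' := (elev_le_iff G S).1 (by rw [hj, hi']; exact hmin u hu huv)
        refine ⟨⟨(i' : ℕ) + 1, Nat.succ_lt_succ i'.isLt⟩,
          ⟨(j : ℕ), Nat.lt_succ_of_lt j.isLt⟩,
          Nat.lt_succ_of_le (Fin.le_def.1 hji), Or.inl ⟨?_, ?_⟩⟩
        · show u ∈ Athr G S ((i' : ℕ) + 1)
          rw [Athr, dif_pos (show (i' : ℕ) + 1 - 1 < (Dlev G S).card ∧ 1 ≤ (i' : ℕ) + 1 from
            ⟨i'.isLt, by omega⟩)]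
          exact ⟨hu, hi'.symm⟩
        · show v ∈ Xthr G S K (j : ℕ)
          rw [Xthr, dif_pos j.isLt]
          exact ⟨hv, t₀, ht₀S, ht₀v, hj.symm,
            fun t htS htv => le_of_eq_of_le hj (hmin t htS htv)⟩
      · right
        obtain ⟨t₀, ht₀S, ht₀v, hmin⟩ := exists_min_adj G S hv huv.symm
        obtain ⟨j, hj⟩ := elev_surj G S (mem_Dlev.2 ⟨(dval_pos ht₀v).ne', t₀, ht₀S, rfl⟩)
        obtain ⟨i', hi'⟩ := elev_surj G S (mem_Dlev.2 ⟨(dval_pos huv.symm).ne', v, hv, rfl⟩)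
        have hji : j ≤ i' := (elev_le_iff G S).1
          (by rw [hj, hi']; exact hmin v hv huv.symm)
        refine ⟨⟨(i' : ℕ) + 1, Nat.succ_lt_succ i'.isLt⟩,
          ⟨(j : ℕ), Nat.lt_succ_of_lt j.isLt⟩,
          Nat.lt_succ_of_le (Fin.le_def.1 hji), Or.inr ⟨?_, ?_⟩⟩
        · show v ∈ Athr G S ((i' : ℕ) + 1)
          rw [Athr, dif_pos (show (i' : ℕ) + 1 - 1 < (Dlev G S).card ∧ 1 ≤ (i' : ℕ) + 1 from
            ⟨i'.isLt, by omega⟩)]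
          exact ⟨hv, hi'.symm⟩
        · show u ∈ Xthr G S K (j : ℕ)
          rw [Xthr, dif_pos j.isLt]
          exact ⟨hu, t₀, ht₀S, ht₀v, hj.symm,
            fun t htS htv => le_of_eq_of_le hj (hmin t htS htv)⟩
      · exact Or.inl ⟨hu, hv, huv.ne⟩
    · rintro (⟨hu, hv, hne⟩ | ⟨i, j, hij, ⟨hA, hX⟩ | ⟨hA, hX⟩⟩)
      · exact hclq u hu v hv hne
      · exact key i j hij u v hA hX
      · exact (key i j hij v u hA hX).symm
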